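/- If a multiplicative function f : ℕ → ℂ satisfies f(x² + xy + y²) = f(x)² + f(x)f(y) + f(y)² for all positive integers x, y, then f(n²) = f(n)² for every positive integer n not divisible by 3. -/
import Mathlib

theorem stmt_1 (f : ℕ → ℂ) (h1 : f 1 = 1)
    (hmul : ∀ m n : ℕ, Nat.gcd m n = 1 → f (m * n) = f m * f n)
    (hfe : ∀ x y : ℕ, 0 < x → 0 < y →
      f (x ^ 2 + y ^ 2 + x * y) = f x ^ 2 + f x * f y + f y ^ 2) :
    ∀ n : ℕ, 0 < n → ¬ (3 ∣ n) → f (n ^ 2) = f n ^ 2 := by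
  intro n hn h3
  have hf3 : f 3 = 3 := by
    have := hfe 1 1 one_pos one_pos
    norm_num [h1] at this
    exact this
  have key := hfe n n hn hn
  have heq : n ^ 2 + n ^ 2 + n * n = 3 * n ^ 2 := by ring
  have hc : Nat.Coprime 3 n := (Nat.Prime.coprime_iff_not_dvd (by norm_num)).2 h3
  have hg : Nat.gcd 3 (n ^ 2) = 1 := hc.pow_right 2
  have hm := hmul 3 (n ^ 2) hg
  rw [heq, hm, hf3] at key
  linear_combination key / 3
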